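/- If ε(E_j) ≤ √(6 r(E_j)) for single-qubit channels (the upper bound of the fidelity–diamond relation with d = 2) and the noise is local, E = E_1 ⊗ … ⊗ E_n, then the average deviation from the twirled average satisfies E_{C̃}‖E(C̃) − E^T‖_◇ ≤ Σ_{j=1}^n 4√(6 r(Ē_j^T)), where Ē_j^T is the average of the local noise over the dressed gates. -/

import Mathlib

open scoped TensorProduct

variable {n : ℕ} {C : Fin n → Type}

/-- Single-qubit superoperators. -/
abbrev LocalOp := Matrix (Fin 2) (Fin 2) ℂ →ₗ[ℂ] Matrix (Fin 2) (Fin 2) ℂ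

/-- `n`-qubit superoperators on the tensor product space. -/
abbrev GlobalOp (n : ℕ) :=
  (⨂[ℂ] _j : Fin n, Matrix (Fin 2) (Fin 2) ℂ) →ₗ[ℂ]
    (⨂[ℂ] _j : Fin n, Matrix (Fin 2) (Fin 2) ℂ)

/-- Local noise: the tensor product `⊗_j E_j(C̃_j)` of the local channels for a
tuple of dressed gates. -/
noncomputable def localNoise [∀ j, Fintype (C j)]
    (F : ∀ j, C j → LocalOp) (c : ∀ j, C j) : GlobalOp n :=
  PiTensorProduct.map (fun j => F j (c j))

/-- The uniform average `E^T` of the local noise over all tuples of dressed gates. -/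
noncomputable def avgNoise [∀ j, Fintype (C j)]
    (F : ∀ j, C j → LocalOp) : GlobalOp n :=
  ((Fintype.card (∀ j, C j) : ℂ))⁻¹ • ∑ c : ∀ j, C j, localNoise F c

/-- The average `Ē_j^T` of the local noise on qubit `j` over its dressed gates. -/
noncomputable def localAvg [∀ j, Fintype (C j)]
    (F : ∀ j, C j → LocalOp) (j : Fin n) : LocalOp :=
  ((Fintype.card (C j) : ℂ))⁻¹ • ∑ c : C j, F j c

section Aux

variable {n : ℕ} {C : Fin n → Type}

/-- Slot-wise subtractivity of `PiTensorProduct.map`. -/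
lemma aux_map_update_sub (G : Fin n → LocalOp) (j : Fin n) (A B : LocalOp) :
    PiTensorProduct.map (Function.update G j (A - B))
      = PiTensorProduct.map (Function.update G j A)
        - PiTensorProduct.map (Function.update G j B) := by
  apply PiTensorProduct.ext
  apply MultilinearMap.ext
  intro x
  simp only [LinearMap.compMultilinearMap_apply, LinearMap.sub_apply, PiTensorProduct.map_tprod]
  have h : ∀ (X : LocalOp), (fun i => Function.update G j X i (x i))
      = Function.update (fun i => G i (x i)) j (X (x j)) := by
    intro X
    funext i
    rcases eq_or_ne i j with rfl | hi
    · simp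
    · simp [Function.update_of_ne hi]
  rw [h, h, h, LinearMap.sub_apply, MultilinearMap.map_update_sub]

/-- `Finset.sum_sub_distrib` for linear maps (stated with the `LinearMap`
subtraction instance). -/
lemma aux_sum_sub {α M₁ M₂ : Type*} [AddCommMonoid M₁] [Module ℂ M₁]
    [AddCommGroup M₂] [Module ℂ M₂] (s : Finset α) (f g : α → (M₁ →ₗ[ℂ] M₂)) :
    ∑ i ∈ s, (f i - g i) = ∑ i ∈ s, f i - ∑ i ∈ s, g i := by
  apply LinearMap.ext
  intro x
  simp [Finset.sum_sub_distrib]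

/-- Subadditivity of a seminorm over finite sums. -/
lemma aux_seminorm_sum_le {α β : Type*} [AddCommMonoid β] (N : β → ℝ)
    (h0 : N 0 = 0) (hadd : ∀ x y, N (x + y) ≤ N x + N y)
    (s : Finset α) (f : α → β) :
    N (∑ i ∈ s, f i) ≤ ∑ i ∈ s, N (f i) := by
  classical
  induction s using Finset.cons_induction with
  | empty => simp [h0]
  | cons a s ha ih =>
      simp only [Finset.sum_cons]
      exact le_trans (hadd _ _) (by linarith)

/-- Marginal of a function of one coordinate over the product space. -/
lemma aux_marginal [∀ j, Fintype (C j)] (j : Fin n) (g : C j → ℝ) :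
    ∑ c : ∀ i, C i, g (c j)
      = (Fintype.card (∀ i : {i // i ≠ j}, C i) : ℝ) * ∑ a : C j, g a := by
  rw [Fintype.sum_equiv (Equiv.piSplitAt j C) (fun c => g (c j)) (fun p => g p.1)
    (fun c => rfl)]
  rw [Fintype.sum_prod_type]
  simp only [Finset.sum_const, Finset.card_univ, nsmul_eq_mul]
  rw [← Finset.mul_sum]

/-- Averaged Cauchy–Schwarz for square roots. -/
lemma aux_avg_sqrt_le {α : Type*} [Fintype α] [Nonempty α] (x : α → ℝ)
    (hx : ∀ a, 0 ≤ x a) :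
    (Fintype.card α : ℝ)⁻¹ * ∑ a, Real.sqrt (x a)
      ≤ Real.sqrt ((Fintype.card α : ℝ)⁻¹ * ∑ a, x a) := by
  have hcard : (0 : ℝ) < (Fintype.card α : ℝ) := by
    exact_mod_cast Fintype.card_pos
  have h1 : (∑ a, Real.sqrt (x a)) ^ 2 ≤ (Fintype.card α : ℝ) * ∑ a, x a := by
    have := sq_sum_le_card_mul_sum_sq (s := (Finset.univ : Finset α))
      (f := fun a => Real.sqrt (x a))
    simpa [Real.sq_sqrt (hx _), Finset.card_univ] using this
  have h2 : (∑ a, Real.sqrt (x a)) ≤ Real.sqrt ((Fintype.card α : ℝ) * ∑ a, x a) := by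
    have := Real.sqrt_le_sqrt h1
    rwa [Real.sqrt_sq (Finset.sum_nonneg fun a _ => Real.sqrt_nonneg _)] at this
  calc (Fintype.card α : ℝ)⁻¹ * ∑ a, Real.sqrt (x a)
      ≤ (Fintype.card α : ℝ)⁻¹ * Real.sqrt ((Fintype.card α : ℝ) * ∑ a, x a) := by
        exact mul_le_mul_of_nonneg_left h2 (by positivity)
    _ = Real.sqrt ((Fintype.card α : ℝ)⁻¹ * ∑ a, x a) := by
        rw [show ((Fintype.card α : ℝ))⁻¹ = Real.sqrt (((Fintype.card α : ℝ))⁻¹ ^ 2) by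
            rw [Real.sqrt_sq (by positivity)],
          ← Real.sqrt_mul (by positivity)]
        congr 1
        rw [Real.sqrt_sq (by positivity), pow_two, mul_assoc, ← mul_assoc _ (Fintype.card α : ℝ),
          inv_mul_cancel₀ hcard.ne', one_mul]

end Aux

/-- If the fidelity–diamond bound `ε(E) ≤ √(6 r(E))` holds for the single-qubit
channels (and their averages), the noise is local, the diamond norm is a cross
seminorm for the local diamond norms, and the infidelity is linear under mixing,
then the average deviation from the twirled average satisfies
`E_C̃ ‖E(C̃) − E^T‖_◇ ≤ Σ_j 4 √(6 r(Ē_j^T))`. -/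
theorem avg_deviation_le_local_infidelities
    [∀ j, Fintype (C j)] [∀ j, Nonempty (C j)]
    (F : ∀ j, C j → LocalOp)
    (N : GlobalOp n → ℝ) (nloc : LocalOp → ℝ) (r : LocalOp → ℝ)
    -- `N` is a seminorm (diamond norm on `n` qubits)
    (hN_nonneg : ∀ x, 0 ≤ N x)
    (hN_add : ∀ x y, N (x + y) ≤ N x + N y)
    (hN_neg : ∀ x, N (-x) = N x)
    (hN_smul : ∀ (a : ℝ) x, N ((a : ℂ) • x) = |a| * N x)
    -- `nloc` is a seminorm (diamond norm on one qubit)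
    (hl_nonneg : ∀ x, 0 ≤ nloc x)
    (hl_add : ∀ x y, nloc (x + y) ≤ nloc x + nloc y)
    (hl_neg : ∀ x, nloc (-x) = nloc x)
    (hl_smul : ∀ (a : ℝ) x, nloc ((a : ℂ) • x) = |a| * nloc x)
    -- cross-norm property (tensor subadditivity ingredients)
    (hcross : ∀ G : ∀ _j : Fin n, LocalOp,
      N (PiTensorProduct.map G) ≤ ∏ j, nloc (G j))
    (hid : nloc LinearMap.id = 1)
    -- channels have local diamond norm at most 1
    (hF_le : ∀ j c, nloc (F j c) ≤ 1)
    -- infidelity is nonnegative on channels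
    (hr_nonneg : ∀ j c, 0 ≤ r (F j c))
    -- fidelity–diamond bound `ε(E) ≤ √(6 r(E))` for the local channels
    (hfd : ∀ j c, (1 / 2 : ℝ) * nloc (F j c - LinearMap.id)
        ≤ Real.sqrt (6 * r (F j c)))
    -- and for their averages (which are again channels)
    (hfd_avg : ∀ j, (1 / 2 : ℝ) * nloc (localAvg F j - LinearMap.id)
        ≤ Real.sqrt (6 * r (localAvg F j)))
    -- linearity of the infidelity under mixing
    (hr_lin : ∀ j, (Fintype.card (C j) : ℝ)⁻¹ * ∑ c : C j, r (F j c)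
        = r (localAvg F j)) :
    (Fintype.card (∀ j, C j) : ℝ)⁻¹ *
        ∑ c : ∀ j, C j, N (localNoise F c - avgNoise F)
      ≤ ∑ j, 4 * Real.sqrt (6 * r (localAvg F j)) := by
  classical
  set M := Fintype.card (∀ j, C j) with hMdef
  set u : ∀ j, C j → ℝ := fun j a => nloc (F j a - LinearMap.id) with hu
  have hMpos : (0:ℝ) < M := by exact_mod_cast Fintype.card_pos
  have hMne : ((M : ℕ) : ℂ) ≠ 0 := by exact_mod_cast hMpos.ne'
  have hN0 : N 0 = 0 := by simpa using hN_smul 0 0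
  have hl0 : nloc 0 = 0 := by simpa using hl_smul 0 0
  -- telescoping bound for differences of tensor products
  have tele : ∀ (G G' : ∀ _j : Fin n, LocalOp), (∀ i, nloc (G i) ≤ 1) →
      (∀ i, nloc (G' i) ≤ 1) →
      N (PiTensorProduct.map G' - PiTensorProduct.map G) ≤ ∑ j, nloc (G' j - G j) := by
    intro G G' hG hG'
    have key : ∀ s : Finset (Fin n),
        N (PiTensorProduct.map (s.piecewise G' G) - PiTensorProduct.map G)
          ≤ ∑ j ∈ s, nloc (G' j - G j) := by
      intro s
      induction s using Finset.induction_on with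
      | empty =>
          have h0 : PiTensorProduct.map ((∅ : Finset (Fin n)).piecewise G' G)
              - PiTensorProduct.map G = 0 := by
            rw [Finset.piecewise_empty]; exact sub_self (PiTensorProduct.map G)
          rw [h0, hN0, Finset.sum_empty]
      | @insert j s hj ih =>
          have hP_le : ∀ i, nloc (s.piecewise G' G i) ≤ 1 := by
            intro i
            by_cases hi : i ∈ s
            · rw [Finset.piecewise_eq_of_mem _ _ _ hi]; exact hG' i
            · rw [Finset.piecewise_eq_of_notMem _ _ _ hi]; exact hG i
          have hPj : s.piecewise G' G j = G j := Finset.piecewise_eq_of_notMem _ _ _ hj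
          have hup : Function.update (s.piecewise G' G) j (G j) = s.piecewise G' G := by
            rw [← hPj]; exact Function.update_eq_self _ _
          have hsplit :
              PiTensorProduct.map ((insert j s).piecewise G' G) - PiTensorProduct.map G
                = PiTensorProduct.map (Function.update (s.piecewise G' G) j (G' j - G j))
                  + (PiTensorProduct.map (s.piecewise G' G) - PiTensorProduct.map G) := by
            rw [Finset.piecewise_insert, aux_map_update_sub, hup]
            abel
          rw [hsplit]
          have hbound :
              N (PiTensorProduct.map (Function.update (s.piecewise G' G) j (G' j - G j)))
                ≤ nloc (G' j - G j) := by
            refine le_trans (hcross _) ?_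
            have hprod : (fun i => nloc (Function.update (s.piecewise G' G) j (G' j - G j) i))
                = Function.update (fun i => nloc (s.piecewise G' G i)) j
                    (nloc (G' j - G j)) := by
              funext i
              rcases eq_or_ne i j with rfl | hi
              · simp
              · simp [Function.update_of_ne hi]
            calc ∏ i, nloc (Function.update (s.piecewise G' G) j (G' j - G j) i)
                = nloc (G' j - G j) * ∏ i ∈ Finset.univ \ {j}, nloc (s.piecewise G' G i) := by
                  rw [show (fun i => nloc (Function.update (s.piecewise G' G) j (G' j - G j) i)) = _ from hprod] at *
                  exact Finset.prod_update_of_mem (Finset.mem_univ j) _ _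
              _ ≤ nloc (G' j - G j) * 1 := by
                  refine mul_le_mul_of_nonneg_left ?_ (hl_nonneg _)
                  exact Finset.prod_le_one (fun i _ => hl_nonneg _) (fun i _ => hP_le i)
              _ = nloc (G' j - G j) := mul_one _
          rw [Finset.sum_insert hj]
          exact le_trans (hN_add _ _) (add_le_add hbound ih)
    simpa using key Finset.univ
  -- local triangle bound
  have hCstep : ∀ (j : Fin n) (a b : C j), nloc (F j a - F j b) ≤ u j a + u j b := by
    intro j a b
    have h : F j a - F j b = (F j a - LinearMap.id) + -(F j b - LinearMap.id) := by abel
    rw [h]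
    refine le_trans (hl_add _ _) ?_
    rw [hl_neg]
  -- per-configuration bound
  have hAB : ∀ c : ∀ j, C j,
      N (localNoise F c - avgNoise F)
        ≤ (M : ℝ)⁻¹ * ∑ c' : ∀ j, C j, ∑ j, (u j (c j) + u j (c' j)) := by
    intro c
    have hc : (((M:ℝ)⁻¹ : ℝ) : ℂ) = ((M : ℂ))⁻¹ := by push_cast; ring
    have hform : localNoise F c - avgNoise F
        = (((M:ℝ)⁻¹ : ℝ) : ℂ) • ∑ c' : ∀ j, C j, (localNoise F c - localNoise F c') := by
      apply LinearMap.ext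
      intro x
      simp only [avgNoise, ← hMdef, hc, LinearMap.sub_apply, LinearMap.smul_apply,
        LinearMap.sum_apply, Finset.sum_sub_distrib, smul_sub, Finset.sum_const,
        Finset.card_univ, ← Nat.cast_smul_eq_nsmul (R := ℂ), smul_smul,
        inv_mul_cancel₀ hMne, one_smul]
    calc N (localNoise F c - avgNoise F)
        = (M:ℝ)⁻¹ * N (∑ c' : ∀ j, C j, (localNoise F c - localNoise F c')) := by
          rw [hform, hN_smul, abs_of_nonneg (by positivity)]
      _ ≤ (M:ℝ)⁻¹ * ∑ c' : ∀ j, C j, N (localNoise F c - localNoise F c') :=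
          mul_le_mul_of_nonneg_left (aux_seminorm_sum_le N hN0 hN_add _ _) (by positivity)
      _ ≤ (M:ℝ)⁻¹ * ∑ c' : ∀ j, C j, ∑ j, (u j (c j) + u j (c' j)) := by
          refine mul_le_mul_of_nonneg_left (Finset.sum_le_sum fun c' _ => ?_) (by positivity)
          refine le_trans (tele (fun j => F j (c' j)) (fun j => F j (c j))
            (fun i => hF_le _ _) (fun i => hF_le _ _)) ?_
          exact Finset.sum_le_sum fun j _ => hCstep j (c j) (c' j)
  -- marginalization
  have hmarg : ∀ j : Fin n, (M:ℝ)⁻¹ * ∑ c : ∀ i, C i, u j (c j)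
      = (Fintype.card (C j) : ℝ)⁻¹ * ∑ a : C j, u j a := by
    intro j
    rw [aux_marginal j (u j)]
    have hM_eq : ((M : ℕ) : ℝ)
        = (Fintype.card (C j) : ℝ) * (Fintype.card (∀ i : {i // i ≠ j}, C i) : ℝ) := by
      rw [← Nat.cast_mul]
      congr 1
      rw [hMdef, Fintype.card_congr (Equiv.piSplitAt j C), Fintype.card_prod]
    have h1 : (0:ℝ) < Fintype.card (C j) := by exact_mod_cast Fintype.card_pos
    have h2 : (0:ℝ) < Fintype.card (∀ i : {i // i ≠ j}, C i) := by
      exact_mod_cast Fintype.card_pos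
    rw [hM_eq]
    field_simp
  set S : ℝ := ∑ j, (Fintype.card (C j) : ℝ)⁻¹ * ∑ a : C j, u j a with hS
  have hA : (M:ℝ)⁻¹ * ∑ c : ∀ i, C i, ∑ j, u j (c j) = S := by
    rw [Finset.sum_comm, hS, Finset.mul_sum]
    exact Finset.sum_congr rfl fun j _ => hmarg j
  have hsum_eq : (M:ℝ)⁻¹ * ∑ c : ∀ i, C i,
      ((M:ℝ)⁻¹ * ∑ c' : ∀ i, C i, ∑ j, (u j (c j) + u j (c' j))) = 2 * S := by
    have hinner : ∀ c : ∀ i, C i,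
        (M:ℝ)⁻¹ * ∑ c' : ∀ i, C i, ∑ j, (u j (c j) + u j (c' j))
          = (∑ j, u j (c j)) + S := by
      intro c
      have h : ∑ c' : ∀ i, C i, ∑ j, (u j (c j) + u j (c' j))
          = (M:ℝ) * (∑ j, u j (c j)) + ∑ c' : ∀ i, C i, ∑ j, u j (c' j) := by
        simp only [Finset.sum_add_distrib]
        rw [Finset.sum_const, Finset.card_univ, ← hMdef, nsmul_eq_mul]
      rw [h, mul_add, ← mul_assoc, inv_mul_cancel₀ hMpos.ne', one_mul, hA]
    simp only [hinner]
    rw [Finset.sum_add_distrib, Finset.sum_const, Finset.card_univ, ← hMdef, nsmul_eq_mul,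
      mul_add, hA, ← mul_assoc, inv_mul_cancel₀ hMpos.ne', one_mul]
    ring
  have hS_le : S ≤ ∑ j, 2 * Real.sqrt (6 * r (localAvg F j)) := by
    refine Finset.sum_le_sum fun j _ => ?_
    have h1 : ∀ a : C j, u j a ≤ 2 * Real.sqrt (6 * r (F j a)) := by
      intro a; have := hfd j a; simp only [hu]; linarith
    calc (Fintype.card (C j):ℝ)⁻¹ * ∑ a : C j, u j a
        ≤ (Fintype.card (C j):ℝ)⁻¹ * ∑ a : C j, 2 * Real.sqrt (6 * r (F j a)) :=
          mul_le_mul_of_nonneg_left (Finset.sum_le_sum fun a _ => h1 a) (by positivity)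
      _ = 2 * ((Fintype.card (C j):ℝ)⁻¹ * ∑ a : C j, Real.sqrt (6 * r (F j a))) := by
          rw [← Finset.mul_sum]; ring
      _ ≤ 2 * Real.sqrt ((Fintype.card (C j):ℝ)⁻¹ * ∑ a : C j, 6 * r (F j a)) := by
          have := aux_avg_sqrt_le (fun a : C j => 6 * r (F j a))
            (fun a => by show (0:ℝ) ≤ 6 * r (F j a); linarith [hr_nonneg j a])
          linarith
      _ = 2 * Real.sqrt (6 * r (localAvg F j)) := by
          congr 1
          rw [← hr_lin j, ← Finset.mul_sum]
          ring
  calc (M:ℝ)⁻¹ * ∑ c : ∀ j, C j, N (localNoise F c - avgNoise F)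
      ≤ (M:ℝ)⁻¹ * ∑ c : ∀ j, C j,
          ((M:ℝ)⁻¹ * ∑ c' : ∀ j, C j, ∑ j, (u j (c j) + u j (c' j))) :=
        mul_le_mul_of_nonneg_left (Finset.sum_le_sum fun c _ => hAB c) (by positivity)
    _ = 2 * S := hsum_eq
    _ ≤ 2 * ∑ j, 2 * Real.sqrt (6 * r (localAvg F j)) := by linarith
    _ = ∑ j, 4 * Real.sqrt (6 * r (localAvg F j)) := by
        rw [Finset.mul_sum]
        exact Finset.sum_congr rfl fun j _ => by ring
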